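/- arXiv:1906.00675 — 2 statements merged into one kernel-verified Lean document; each statement's English description precedes it below -/
import Mathlib

section
/- Let ε be a real-valued random variable on a probability space (Ω, μ) with E[ε] = 0 and E[ε²] = σ², and with ε square-integrable. Let y, u, v ∈ ℝ^m be a target and the two branch outputs, and a, b ∈ ℝ^m the branch derivatives. Then the expected linearized DKS loss satisfies E[ (1/2)‖(u + ε•a) − y‖² + (1/2)‖(v + ε•b) − y‖² + (1/2)‖(u + ε•a) − (v + ε•b)‖²] = (1/2)‖u − y‖² + (1/2)‖v − y‖² + (1/2)‖u − v‖² + (σ²/2)(‖a‖² + ‖b‖² + ‖a − b‖²). In particular, the expected linearized DKS loss exceeds the expected linearized DS loss E[(1/2)‖(u + ε•a) − y‖² + (1/2)‖(v + ε•b) − y‖²] by exactly (1/2)‖u − v‖² + (σ²/2)‖a − b‖², a term penalizing the inconsistency between the two branches' derivatives. -/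
open MeasureTheory

lemma sq_expand {E : Type*} [NormedAddCommGroup E] [InnerProductSpace ℝ E]
    (p q : E) (t : ℝ) :
    ‖p + t • q‖ ^ 2 = ‖p‖ ^ 2 + (2 * inner ℝ p q) * t + ‖q‖ ^ 2 * t ^ 2 := by
  rw [norm_add_sq_real, real_inner_smul_right, norm_smul]
  simp [mul_pow, sq_abs]
  ring

lemma integral_poly {Ω : Type*} [MeasurableSpace Ω] (μ : Measure Ω) [IsProbabilityMeasure μ]
    (ε : Ω → ℝ) (σ : ℝ) (hε2 : MemLp ε 2 μ)
    (hmean : ∫ ω, ε ω ∂μ = 0) (hvar : ∫ ω, (ε ω) ^ 2 ∂μ = σ ^ 2)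
    (c0 c1 c2 : ℝ) :
    ∫ ω, (c0 + c1 * ε ω + c2 * (ε ω) ^ 2) ∂μ = c0 + c2 * σ ^ 2 := by
  have h1 : Integrable ε μ := hε2.integrable one_le_two
  have h2 : Integrable (fun ω => (ε ω) ^ 2) μ := hε2.integrable_sq
  rw [integral_add (by exact (integrable_const c0).add (h1.const_mul c1)) (h2.const_mul c2),
      integral_add (integrable_const c0) (h1.const_mul c1),
      integral_const_mul, integral_const_mul, hmean, hvar]
  simp

/-- Expected linearized DKS loss decomposition: it equals the expected linearized
DS loss terms `½‖u − y‖² + ½‖v − y‖²` plus `½‖u − v‖²` plus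
`(σ²/2)(‖a‖² + ‖b‖² + ‖a − b‖²)`; equivalently, it exceeds the expected
linearized DS loss by exactly `½‖u − v‖² + (σ²/2)‖a − b‖²`. -/
theorem expected_linearized_DKS_loss
    {Ω : Type*} [MeasurableSpace Ω] (μ : Measure Ω) [IsProbabilityMeasure μ]
    (ε : Ω → ℝ) (σ : ℝ)
    (hε2 : MemLp ε 2 μ)
    (hmean : ∫ ω, ε ω ∂μ = 0)
    (hvar : ∫ ω, (ε ω) ^ 2 ∂μ = σ ^ 2)
    {m : ℕ} (y u v a b : EuclideanSpace ℝ (Fin m)) :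
    (∫ ω, ((1 / 2 : ℝ) * ‖(u + ε ω • a) - y‖ ^ 2 + (1 / 2) * ‖(v + ε ω • b) - y‖ ^ 2
          + (1 / 2) * ‖(u + ε ω • a) - (v + ε ω • b)‖ ^ 2) ∂μ)
      = (1 / 2) * ‖u - y‖ ^ 2 + (1 / 2) * ‖v - y‖ ^ 2 + (1 / 2) * ‖u - v‖ ^ 2
          + (σ ^ 2 / 2) * (‖a‖ ^ 2 + ‖b‖ ^ 2 + ‖a - b‖ ^ 2) ∧
    (∫ ω, ((1 / 2 : ℝ) * ‖(u + ε ω • a) - y‖ ^ 2 + (1 / 2) * ‖(v + ε ω • b) - y‖ ^ 2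
          + (1 / 2) * ‖(u + ε ω • a) - (v + ε ω • b)‖ ^ 2) ∂μ)
      = (∫ ω, ((1 / 2 : ℝ) * ‖(u + ε ω • a) - y‖ ^ 2
          + (1 / 2) * ‖(v + ε ω • b) - y‖ ^ 2) ∂μ)
          + ((1 / 2) * ‖u - v‖ ^ 2 + (σ ^ 2 / 2) * ‖a - b‖ ^ 2) := by
  have e1 : ∀ t : ℝ, u + t • a - y = (u - y) + t • a := fun t => add_sub_right_comm u (t • a) y
  have e2 : ∀ t : ℝ, v + t • b - y = (v - y) + t • b := fun t => add_sub_right_comm v (t • b) y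
  have e3 : ∀ t : ℝ, (u + t • a) - (v + t • b) = (u - v) + t • (a - b) := fun t => by
    rw [smul_sub]; abel
  have hDKS : (∫ ω, ((1 / 2 : ℝ) * ‖(u + ε ω • a) - y‖ ^ 2 + (1 / 2) * ‖(v + ε ω • b) - y‖ ^ 2
          + (1 / 2) * ‖(u + ε ω • a) - (v + ε ω • b)‖ ^ 2) ∂μ)
      = ((1 / 2) * ‖u - y‖ ^ 2 + (1 / 2) * ‖v - y‖ ^ 2 + (1 / 2) * ‖u - v‖ ^ 2)
        + ((1 / 2) * (‖a‖ ^ 2 + ‖b‖ ^ 2 + ‖a - b‖ ^ 2)) * σ ^ 2 := by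
    rw [← integral_poly μ ε σ hε2 hmean hvar
        ((1 / 2) * ‖u - y‖ ^ 2 + (1 / 2) * ‖v - y‖ ^ 2 + (1 / 2) * ‖u - v‖ ^ 2)
        ((inner ℝ (u - y) a : ℝ) + (inner ℝ (v - y) b : ℝ) + (inner ℝ (u - v) (a - b) : ℝ))
        ((1 / 2) * (‖a‖ ^ 2 + ‖b‖ ^ 2 + ‖a - b‖ ^ 2))]
    apply integral_congr_ae
    filter_upwards with ω
    rw [e1 (ε ω), e2 (ε ω), e3 (ε ω), sq_expand, sq_expand, sq_expand]
    ring
  have hDS : (∫ ω, ((1 / 2 : ℝ) * ‖(u + ε ω • a) - y‖ ^ 2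
          + (1 / 2) * ‖(v + ε ω • b) - y‖ ^ 2) ∂μ)
      = ((1 / 2) * ‖u - y‖ ^ 2 + (1 / 2) * ‖v - y‖ ^ 2)
        + ((1 / 2) * (‖a‖ ^ 2 + ‖b‖ ^ 2)) * σ ^ 2 := by
    rw [← integral_poly μ ε σ hε2 hmean hvar
        ((1 / 2) * ‖u - y‖ ^ 2 + (1 / 2) * ‖v - y‖ ^ 2)
        ((inner ℝ (u - y) a : ℝ) + (inner ℝ (v - y) b : ℝ))
        ((1 / 2) * (‖a‖ ^ 2 + ‖b‖ ^ 2))]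
    apply integral_congr_ae
    filter_upwards with ω
    rw [e1 (ε ω), e2 (ε ω), sq_expand, sq_expand]
    ring
  constructor
  · rw [hDKS]; ring
  · rw [hDKS, hDS]; ring
end

section
/- Let h : ℝ → ℝ be differentiable with derivative h' Lipschitz with constant L ≥ 0. Let ε be a real-valued random variable on a probability space (Ω, μ) with E[ε] = 0, E[ε²] = σ², and with E[|ε|³] and E[ε⁴] finite. Then for every z ∈ ℝ, the random variable h(z+ε)² is integrable and | E[ (1/2) h(z+ε)² ] − (1/2) h(z)² − (σ²/2) h'(z)² | ≤ (L/2)·|h(z)|·σ² + (L/2)·|h'(z)|·E[|ε|³] + (L²/8)·E[ε⁴]. (This is a rigorous form of the paper's Proposition for the difference function h = g₁ − g₂ of two branches: up to terms controlled by third and fourth moments of ε, the expected synergy term equals a term matching the branch outputs plus (σ²/2) times the squared difference of the branch derivatives at z.) -/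
open MeasureTheory

open intervalIntegral in
lemma taylor_remainder {h : ℝ → ℝ} (hdiff : Differentiable ℝ h) {L : ℝ} (hL : 0 ≤ L)
    (hlip : LipschitzWith L.toNNReal (deriv h)) (z e : ℝ) :
    |h (z + e) - h z - e * deriv h z| ≤ L / 2 * e ^ 2 := by
  have hcont : Continuous (deriv h) := hlip.continuous
  have hder : ∀ t ∈ Set.uIcc (0:ℝ) e, HasDerivAt (fun s => h (z + s)) (deriv h (z + t)) t := by
    intro t _
    have h1 : HasDerivAt (fun s : ℝ => z + s) 1 t := (hasDerivAt_id t).const_add z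
    have := ((hdiff (z + t)).hasDerivAt).comp t h1
    simp only [mul_one] at this
    exact this
  have hci : IntervalIntegrable (fun t => deriv h (z + t)) volume 0 e :=
    ((hcont.comp (continuous_const.add continuous_id)).intervalIntegrable 0 e)
  have key : h (z + e) - h z = ∫ t in (0:ℝ)..e, deriv h (z + t) := by
    rw [intervalIntegral.integral_eq_sub_of_hasDerivAt hder hci]
    simp
  have key2 : e * deriv h z = ∫ t in (0:ℝ)..e, deriv h z := by simp
  have hrem : h (z + e) - h z - e * deriv h z
      = ∫ t in (0:ℝ)..e, (deriv h (z + t) - deriv h z) := by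
    rw [key, key2, intervalIntegral.integral_sub hci (intervalIntegrable_const)]
  have hptw : ∀ t : ℝ, |deriv h (z + t) - deriv h z| ≤ L * |t| := by
    intro t
    have := hlip.dist_le_mul (z + t) z
    simp only [Real.dist_eq] at this
    calc |deriv h (z + t) - deriv h z| ≤ ↑L.toNNReal * |z + t - z| := this
      _ = L * |t| := by rw [Real.coe_toNNReal L hL]; ring_nf
  have hgi : IntervalIntegrable (fun t => |deriv h (z + t) - deriv h z|) volume 0 e :=
    (((hcont.comp (continuous_const.add continuous_id)).sub continuous_const).abs).intervalIntegrable 0 e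
  have hLi : IntervalIntegrable (fun t : ℝ => L * |t|) volume 0 e :=
    (continuous_const.mul continuous_abs).intervalIntegrable 0 e
  rw [hrem]
  rcases le_or_gt 0 e with he | he
  · calc |∫ t in (0:ℝ)..e, (deriv h (z + t) - deriv h z)|
        ≤ ∫ t in (0:ℝ)..e, |deriv h (z + t) - deriv h z| := by
          exact intervalIntegral.abs_integral_le_integral_abs he
      _ ≤ ∫ t in (0:ℝ)..e, L * |t| := by
          apply intervalIntegral.integral_mono_on he hgi hLi
          intro t ht
          exact hptw t
      _ = L / 2 * e ^ 2 := by
          rw [intervalIntegral.integral_const_mul]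
          have : ∫ t in (0:ℝ)..e, |t| = ∫ t in (0:ℝ)..e, t := by
            apply intervalIntegral.integral_congr
            intro t ht
            rw [Set.uIcc_of_le he] at ht
            exact abs_of_nonneg ht.1
          rw [this, integral_id]
          ring
  · have h0 : (∫ t in (0:ℝ)..e, (deriv h (z + t) - deriv h z))
        = -(∫ t in e..(0:ℝ), (deriv h (z + t) - deriv h z)) := by
      rw [intervalIntegral.integral_symm]
    rw [h0, abs_neg]
    calc |∫ t in e..(0:ℝ), (deriv h (z + t) - deriv h z)|
        ≤ ∫ t in e..(0:ℝ), |deriv h (z + t) - deriv h z| := by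
          exact intervalIntegral.abs_integral_le_integral_abs he.le
      _ ≤ ∫ t in e..(0:ℝ), L * |t| := by
          apply intervalIntegral.integral_mono_on he.le hgi.symm hLi.symm
          intro t ht
          exact hptw t
      _ = L / 2 * e ^ 2 := by
          rw [intervalIntegral.integral_const_mul]
          have : ∫ t in e..(0:ℝ), |t| = ∫ t in e..(0:ℝ), -t := by
            apply intervalIntegral.integral_congr
            intro t ht
            rw [Set.uIcc_of_le he.le] at ht
            exact abs_of_nonpos ht.2
          rw [this, intervalIntegral.integral_neg, integral_id]
          ring

/-- Rigorous form of the paper's Proposition for `h = g₁ − g₂` with scalar feature: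
the expected synergy term `E[½ h(z+ε)²]` equals `½ h(z)² + (σ²/2) h'(z)²` up to an
error controlled by the third and fourth moments of `ε`. -/
theorem expected_synergy_taylor_scalar
    {Ω : Type*} [MeasurableSpace Ω] (μ : Measure Ω) [IsProbabilityMeasure μ]
    (h : ℝ → ℝ) (hdiff : Differentiable ℝ h)
    (L : ℝ) (hL : 0 ≤ L) (hlip : LipschitzWith L.toNNReal (deriv h))
    (ε : Ω → ℝ) (σ : ℝ)
    (hεint : Integrable ε μ)
    (hε2int : Integrable (fun ω => (ε ω) ^ 2) μ)
    (hε3int : Integrable (fun ω => |ε ω| ^ 3) μ)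
    (hε4int : Integrable (fun ω => (ε ω) ^ 4) μ)
    (hmean : ∫ ω, ε ω ∂μ = 0)
    (hvar : ∫ ω, (ε ω) ^ 2 ∂μ = σ ^ 2)
    (z : ℝ) :
    Integrable (fun ω => (h (z + ε ω)) ^ 2) μ ∧
      |(∫ ω, (1 / 2 : ℝ) * (h (z + ε ω)) ^ 2 ∂μ)
          - (1 / 2) * (h z) ^ 2 - (σ ^ 2 / 2) * (deriv h z) ^ 2|
        ≤ (L / 2) * |h z| * σ ^ 2
          + (L / 2) * |deriv h z| * (∫ ω, |ε ω| ^ 3 ∂μ)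
          + (L ^ 2 / 8) * (∫ ω, (ε ω) ^ 4 ∂μ) := by
  set a := h z with ha
  set b := deriv h z with hb
  set r : Ω → ℝ := fun ω => h (z + ε ω) - a - ε ω * b with hr
  have hrb : ∀ ω, |r ω| ≤ L / 2 * (ε ω) ^ 2 := fun ω =>
    taylor_remainder hdiff hL hlip z (ε ω)
  have hεm : AEStronglyMeasurable ε μ := hεint.1
  have hφm : AEStronglyMeasurable (fun ω => h (z + ε ω)) μ :=
    hdiff.continuous.comp_aestronglyMeasurable (aestronglyMeasurable_const.add hεm)
  have hrm : AEStronglyMeasurable r μ :=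
    (hφm.sub aestronglyMeasurable_const).sub (hεm.mul aestronglyMeasurable_const)
  have hrint : Integrable r μ := by
    apply Integrable.mono' (hε2int.const_mul (L / 2)) hrm
    filter_upwards with ω
    simpa [Real.norm_eq_abs] using hrb ω
  have habs3 : ∀ ω, |ε ω| * |r ω| ≤ L / 2 * |ε ω| ^ 3 := by
    intro ω
    calc |ε ω| * |r ω| ≤ |ε ω| * (L / 2 * (ε ω) ^ 2) :=
          mul_le_mul_of_nonneg_left (hrb ω) (abs_nonneg _)
      _ = L / 2 * |ε ω| ^ 3 := by rw [← sq_abs]; ring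
  have habs4 : ∀ ω, |(r ω) ^ 2| ≤ L ^ 2 / 4 * (ε ω) ^ 4 := by
    intro ω
    rw [abs_pow]
    calc |r ω| ^ 2 ≤ (L / 2 * (ε ω) ^ 2) ^ 2 := by
          apply pow_le_pow_left₀ (abs_nonneg _) (hrb ω)
      _ = L ^ 2 / 4 * (ε ω) ^ 4 := by ring
  have hεrint : Integrable (fun ω => ε ω * r ω) μ := by
    apply Integrable.mono' (hε3int.const_mul (L / 2)) (hεm.mul hrm)
    filter_upwards with ω
    simpa [Real.norm_eq_abs, abs_mul] using habs3 ω
  have hr2int : Integrable (fun ω => (r ω) ^ 2) μ := by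
    apply Integrable.mono' (hε4int.const_mul (L ^ 2 / 4)) (hrm.pow 2)
    filter_upwards with ω
    simpa [Real.norm_eq_abs] using habs4 ω
  -- expansion
  have hexp : ∀ ω, (h (z + ε ω)) ^ 2
      = a ^ 2 + (2 * a * b) * ε ω + b ^ 2 * (ε ω) ^ 2
        + (2 * a) * r ω + (2 * b) * (ε ω * r ω) + (r ω) ^ 2 := by
    intro ω
    have : h (z + ε ω) = a + ε ω * b + r ω := by simp [hr]
    rw [this]; ring
  have hsqint : Integrable (fun ω => (h (z + ε ω)) ^ 2) μ := by
    have : Integrable (fun ω => a ^ 2 + (2 * a * b) * ε ω + b ^ 2 * (ε ω) ^ 2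
        + (2 * a) * r ω + (2 * b) * (ε ω * r ω) + (r ω) ^ 2) μ :=
      (((((integrable_const _).add (hεint.const_mul _)).add (hε2int.const_mul _)).add
        (hrint.const_mul _)).add (hεrint.const_mul _)).add hr2int
    exact this.congr (by filter_upwards with ω using (hexp ω).symm)
  refine ⟨hsqint, ?_⟩
  -- the half expansion
  have hexp2 : ∀ ω, (1 / 2 : ℝ) * (h (z + ε ω)) ^ 2
      = (1 / 2 * a ^ 2 + (a * b) * ε ω + (b ^ 2 / 2) * (ε ω) ^ 2)
        + (a * r ω + b * (ε ω * r ω) + (1 / 2) * (r ω) ^ 2) := by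
    intro ω; rw [hexp ω]; ring
  set F : Ω → ℝ := fun ω => a * r ω + b * (ε ω * r ω) + (1 / 2) * (r ω) ^ 2 with hF
  have hFint : Integrable F μ :=
    ((hrint.const_mul a).add (hεrint.const_mul b)).add (hr2int.const_mul _)
  have hGint : Integrable (fun ω => 1 / 2 * a ^ 2 + (a * b) * ε ω + (b ^ 2 / 2) * (ε ω) ^ 2) μ :=
    ((integrable_const _).add (hεint.const_mul _)).add (hε2int.const_mul _)
  have hIeq : (∫ ω, (1 / 2 : ℝ) * (h (z + ε ω)) ^ 2 ∂μ)
      = (1 / 2 * a ^ 2 + (b ^ 2 / 2) * σ ^ 2) + ∫ ω, F ω ∂μ := by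
    have : (∫ ω, (1 / 2 : ℝ) * (h (z + ε ω)) ^ 2 ∂μ)
        = ∫ ω, (1 / 2 * a ^ 2 + (a * b) * ε ω + (b ^ 2 / 2) * (ε ω) ^ 2) + F ω ∂μ :=
      integral_congr_ae (by filter_upwards with ω using hexp2 ω)
    have e1 := integral_add hGint hFint
    have e2 := integral_add (μ := μ)
      (f := fun ω => 1 / 2 * a ^ 2 + (a * b) * ε ω) (g := fun ω => (b ^ 2 / 2) * (ε ω) ^ 2)
      ((integrable_const _).add (hεint.const_mul _)) (hε2int.const_mul _)
    have e3 := integral_add (μ := μ) (f := fun _ => (1 / 2 : ℝ) * a ^ 2)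
      (g := fun ω => (a * b) * ε ω) (integrable_const _) (hεint.const_mul _)
    rw [this, e1, e2, e3]
    simp only [integral_const_mul, hmean, hvar, integral_const, measure_univ, probReal_univ,
      ENNReal.toReal_one, smul_eq_mul, one_mul, mul_zero, add_zero]
  rw [hIeq]
  have key : |∫ ω, F ω ∂μ|
      ≤ (L / 2) * |a| * σ ^ 2 + (L / 2) * |b| * (∫ ω, |ε ω| ^ 3 ∂μ)
        + (L ^ 2 / 8) * (∫ ω, (ε ω) ^ 4 ∂μ) := by
    have hbound : ∀ ω, |F ω| ≤ (L / 2 * |a|) * (ε ω) ^ 2 + (L / 2 * |b|) * |ε ω| ^ 3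
        + (L ^ 2 / 8) * (ε ω) ^ 4 := by
      intro ω
      have h1 : |a * r ω| ≤ |a| * (L / 2 * (ε ω) ^ 2) := by
        rw [abs_mul]; exact mul_le_mul_of_nonneg_left (hrb ω) (abs_nonneg _)
      have h2 : |b * (ε ω * r ω)| ≤ |b| * (L / 2 * |ε ω| ^ 3) := by
        rw [abs_mul, abs_mul]; exact mul_le_mul_of_nonneg_left (habs3 ω) (abs_nonneg _)
      have h3 : |(1 / 2 : ℝ) * (r ω) ^ 2| ≤ 1 / 2 * (L ^ 2 / 4 * (ε ω) ^ 4) := by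
        rw [abs_mul]
        have : |(1 / 2 : ℝ)| = 1 / 2 := by norm_num
        rw [this]
        exact mul_le_mul_of_nonneg_left (habs4 ω) (by norm_num)
      calc |F ω| ≤ |a * r ω| + |b * (ε ω * r ω)| + |(1 / 2 : ℝ) * (r ω) ^ 2| := by
            apply (abs_add_le _ _).trans
            exact add_le_add_left (abs_add_le _ _) _
        _ ≤ |a| * (L / 2 * (ε ω) ^ 2) + |b| * (L / 2 * |ε ω| ^ 3)
            + 1 / 2 * (L ^ 2 / 4 * (ε ω) ^ 4) := by
            exact add_le_add (add_le_add h1 h2) h3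
        _ = (L / 2 * |a|) * (ε ω) ^ 2 + (L / 2 * |b|) * |ε ω| ^ 3
            + (L ^ 2 / 8) * (ε ω) ^ 4 := by ring
    have hboundint : Integrable (fun ω => (L / 2 * |a|) * (ε ω) ^ 2
        + (L / 2 * |b|) * |ε ω| ^ 3 + (L ^ 2 / 8) * (ε ω) ^ 4) μ :=
      ((hε2int.const_mul _).add (hε3int.const_mul _)).add (hε4int.const_mul _)
    calc |∫ ω, F ω ∂μ| ≤ ∫ ω, |F ω| ∂μ := by
          simpa [Real.norm_eq_abs] using norm_integral_le_integral_norm (μ := μ) F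
      _ ≤ ∫ ω, ((L / 2 * |a|) * (ε ω) ^ 2 + (L / 2 * |b|) * |ε ω| ^ 3
            + (L ^ 2 / 8) * (ε ω) ^ 4) ∂μ := by
          apply integral_mono hFint.abs hboundint
          intro ω; exact hbound ω
      _ = (L / 2) * |a| * σ ^ 2 + (L / 2) * |b| * (∫ ω, |ε ω| ^ 3 ∂μ)
            + (L ^ 2 / 8) * (∫ ω, (ε ω) ^ 4 ∂μ) := by
          have e1 := integral_add (μ := μ)
            (f := fun ω => (L / 2 * |a|) * (ε ω) ^ 2 + (L / 2 * |b|) * |ε ω| ^ 3)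
            (g := fun ω => (L ^ 2 / 8) * (ε ω) ^ 4)
            ((hε2int.const_mul _).add (hε3int.const_mul _)) (hε4int.const_mul _)
          have e2 := integral_add (μ := μ)
            (f := fun ω => (L / 2 * |a|) * (ε ω) ^ 2) (g := fun ω => (L / 2 * |b|) * |ε ω| ^ 3)
            (hε2int.const_mul _) (hε3int.const_mul _)
          rw [e1, e2]
          simp only [integral_const_mul, hvar]
  have h9 : 1 / 2 * a ^ 2 + b ^ 2 / 2 * σ ^ 2 + (∫ ω, F ω ∂μ) - 1 / 2 * a ^ 2
      - σ ^ 2 / 2 * b ^ 2 = ∫ ω, F ω ∂μ := by ring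
  rw [h9]
  exact key
end
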